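/- Suppose n ≡ 0 (mod 4) or n ≡ 1 (mod 4) with n ≥ 4. Then for every ℓ ∈ [n], the number of n-queens configurations Q fixed by the 90° rotation r with U_ℓ ⊆ Q equals the number of n-queens configurations Q fixed by r with U_{n+1−ℓ} ⊆ Q. -/

import Mathlib

open scoped Classical

/-- The `n × n` board, with squares indexed by `[n] × [n]` where `[n] = {1, …, n}`. -/
def board (n : ℕ) : Finset (ℕ × ℕ) := Finset.Icc 1 n ×ˢ Finset.Icc 1 n

/-- `Q` is an `n`-queens configuration: `Q ⊆ [n] × [n]`, `|Q| = n`, and every row,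
column, diagonal (`j - i + n = k`) and anti-diagonal (`i + j - 1 = k`) contains at
most one element of `Q`. -/
def IsQueensConfig (n : ℕ) (Q : Finset (ℕ × ℕ)) : Prop :=
  Q ⊆ board n ∧ Q.card = n ∧
  (∀ p ∈ Q, ∀ q ∈ Q, p.1 = q.1 → p = q) ∧
  (∀ p ∈ Q, ∀ q ∈ Q, p.2 = q.2 → p = q) ∧
  (∀ p ∈ Q, ∀ q ∈ Q, p.2 + n - p.1 = q.2 + n - q.1 → p = q) ∧
  (∀ p ∈ Q, ∀ q ∈ Q, p.1 + p.2 - 1 = q.1 + q.2 - 1 → p = q)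

/-- `Q(n)`: the number of `n`-queens configurations. -/
noncomputable def queensCount (n : ℕ) : ℕ :=
  ((board n).powerset.filter (fun Q => IsQueensConfig n Q)).card

/-- The vertical reflection `s`, `sQ = {(i, n+1-j) : (i,j) ∈ Q}`. -/
def sAct (n : ℕ) (Q : Finset (ℕ × ℕ)) : Finset (ℕ × ℕ) :=
  Q.image (fun p => (p.1, n + 1 - p.2))

/-- The 90° counter-clockwise rotation `r`, `rQ = {(n+1-j, i) : (i,j) ∈ Q}`. -/
def rAct (n : ℕ) (Q : Finset (ℕ × ℕ)) : Finset (ℕ × ℕ) :=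
  Q.image (fun p => (n + 1 - p.2, p.1))

/-- The border configuration `U_ℓ`: four `r`-symmetric border squares, together with
the center square `((n+1)/2, (n+1)/2)` when `n ≡ 1 (mod 4)`. -/
def borderU (n ℓ : ℕ) : Finset (ℕ × ℕ) :=
  if n % 4 = 0 then
    {(1, ℓ), (ℓ, n), (n, n + 1 - ℓ), (n + 1 - ℓ, 1)}
  else
    {(1, ℓ), (ℓ, n), (n, n + 1 - ℓ), (n + 1 - ℓ, 1)} ∪ {((n + 1) / 2, (n + 1) / 2)}

lemma mem_board {n : ℕ} {p : ℕ × ℕ} :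
    p ∈ board n ↔ 1 ≤ p.1 ∧ p.1 ≤ n ∧ 1 ≤ p.2 ∧ p.2 ≤ n := by
  simp only [board, Finset.mem_product, Finset.mem_Icc]
  tauto

lemma sAct_subset_board {n : ℕ} {Q : Finset (ℕ × ℕ)} (hQ : Q ⊆ board n) :
    sAct n Q ⊆ board n := by
  intro p hp
  obtain ⟨q, hq, rfl⟩ := Finset.mem_image.mp hp
  have := mem_board.mp (hQ hq)
  exact mem_board.mpr ⟨by omega, by omega, by omega, by omega⟩

lemma sAct_sAct {n : ℕ} {Q : Finset (ℕ × ℕ)} (hQ : Q ⊆ board n) :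
    sAct n (sAct n Q) = Q := by
  unfold sAct
  rw [Finset.image_image]
  have : ∀ p ∈ Q, ((fun p : ℕ × ℕ => (p.1, n + 1 - p.2)) ∘
      (fun p : ℕ × ℕ => (p.1, n + 1 - p.2))) p = id p := by
    intro p hp
    have := mem_board.mp (hQ hp)
    simp only [Function.comp_apply, id_eq]
    exact Prod.ext rfl (by omega)
  rw [Finset.image_congr this, Finset.image_id]

lemma isQueensConfig_sAct {n : ℕ} {Q : Finset (ℕ × ℕ)} (h : IsQueensConfig n Q) :
    IsQueensConfig n (sAct n Q) := by
  obtain ⟨hsub, hcard, hrow, hcol, hdiag, hanti⟩ := h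
  have hb : ∀ p ∈ Q, 1 ≤ p.1 ∧ p.1 ≤ n ∧ 1 ≤ p.2 ∧ p.2 ≤ n :=
    fun p hp => mem_board.mp (hsub hp)
  refine ⟨sAct_subset_board hsub, ?_, ?_, ?_, ?_, ?_⟩
  · rw [sAct, Finset.card_image_of_injOn, hcard]
    intro p hp q hq hpq
    have h1 := hb p (Finset.mem_coe.mp hp)
    have h2 := hb q (Finset.mem_coe.mp hq)
    simp only [Prod.mk.injEq] at hpq
    exact Prod.ext hpq.1 (by omega)
  · intro p hp q hq hpq
    obtain ⟨p', hp', rfl⟩ := Finset.mem_image.mp hp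
    obtain ⟨q', hq', rfl⟩ := Finset.mem_image.mp hq
    simp only at hpq
    rw [hrow p' hp' q' hq' hpq]
  · intro p hp q hq hpq
    obtain ⟨p', hp', rfl⟩ := Finset.mem_image.mp hp
    obtain ⟨q', hq', rfl⟩ := Finset.mem_image.mp hq
    have h1 := hb p' hp'
    have h2 := hb q' hq'
    simp only at hpq
    rw [hcol p' hp' q' hq' (by omega)]
  · intro p hp q hq hpq
    obtain ⟨p', hp', rfl⟩ := Finset.mem_image.mp hp
    obtain ⟨q', hq', rfl⟩ := Finset.mem_image.mp hq
    have h1 := hb p' hp'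
    have h2 := hb q' hq'
    simp only at hpq
    rw [hanti p' hp' q' hq' (by omega)]
  · intro p hp q hq hpq
    obtain ⟨p', hp', rfl⟩ := Finset.mem_image.mp hp
    obtain ⟨q', hq', rfl⟩ := Finset.mem_image.mp hq
    have h1 := hb p' hp'
    have h2 := hb q' hq'
    simp only at hpq
    rw [hdiag p' hp' q' hq' (by omega)]

lemma rAct_sAct {n : ℕ} {Q : Finset (ℕ × ℕ)} (hQ : Q ⊆ board n)
    (hr : rAct n Q = Q) : rAct n (sAct n Q) = sAct n Q := by
  have hb : ∀ p ∈ Q, 1 ≤ p.1 ∧ p.1 ≤ n ∧ 1 ≤ p.2 ∧ p.2 ≤ n :=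
    fun p hp => mem_board.mp (hQ hp)
  -- r ∘ s on the board is the transpose
  have hA : rAct n (sAct n Q) = Q.image (fun p => (p.2, p.1)) := by
    unfold rAct sAct
    rw [Finset.image_image]
    apply Finset.image_congr
    intro p hp
    have := hb p (Finset.mem_coe.mp hp)
    simp only [Function.comp_apply]
    exact Prod.ext (by omega) rfl
  -- r ∘ r is the central symmetry, and it fixes Q
  have hC : Q.image (fun p : ℕ × ℕ => (n + 1 - p.1, n + 1 - p.2)) = Q := by
    have : Q.image (fun p : ℕ × ℕ => (n + 1 - p.1, n + 1 - p.2)) =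
        rAct n (rAct n Q) := by
      unfold rAct
      rw [Finset.image_image]
      rfl
    rw [this, hr, hr]
  -- s Q = s (r Q) = central symmetry of the transpose
  have hS : sAct n Q = (Q.image (fun p : ℕ × ℕ => (p.2, p.1))).image
      (fun p : ℕ × ℕ => (n + 1 - p.1, n + 1 - p.2)) := by
    conv_lhs => rw [← hr]
    unfold sAct rAct
    rw [Finset.image_image, Finset.image_image]
    rfl
  rw [hA, hS]
  conv_lhs => rw [← hC]
  rw [Finset.image_image, Finset.image_image]
  rfl

set_option maxHeartbeats 1000000 in
lemma sAct_borderU {n l : ℕ} (hmod : n % 4 = 0 ∨ n % 4 = 1)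
    (hl1 : 1 ≤ l) (hl2 : l ≤ n) :
    sAct n (borderU n l) = borderU n (n + 1 - l) := by
  unfold sAct borderU
  by_cases h : n % 4 = 0
  · simp only [if_pos h]
    ext ⟨i, j⟩
    simp only [Finset.mem_image, Finset.mem_insert, Finset.mem_singleton, Prod.ext_iff,
      Prod.exists]
    constructor
    · rintro ⟨a, b, hab, h1, h2⟩
      omega
    · rintro h'
      rcases h' with ⟨h1, h2⟩ | ⟨h1, h2⟩ | ⟨h1, h2⟩ | ⟨h1, h2⟩
      · exact ⟨1, l, by tauto, by omega, by omega⟩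
      · exact ⟨n + 1 - l, 1, by tauto, by omega, by omega⟩
      · exact ⟨n, n + 1 - l, by tauto, by omega, by omega⟩
      · exact ⟨l, n, by tauto, by omega, by omega⟩
  · have h1 : n % 4 = 1 := by tauto
    simp only [if_neg h]
    ext ⟨i, j⟩
    simp only [Finset.mem_image, Finset.mem_union, Finset.mem_insert,
      Finset.mem_singleton, Prod.ext_iff, Prod.exists]
    constructor
    · rintro ⟨a, b, hab, ha, hb⟩
      omega
    · intro h'
      rcases h' with (⟨hi, hj⟩ | ⟨hi, hj⟩ | ⟨hi, hj⟩ | ⟨hi, hj⟩) | ⟨hi, hj⟩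
      · exact ⟨1, l, by tauto, by omega, by omega⟩
      · exact ⟨n + 1 - l, 1, by tauto, by omega, by omega⟩
      · exact ⟨n, n + 1 - l, by tauto, by omega, by omega⟩
      · exact ⟨l, n, by tauto, by omega, by omega⟩
      · exact ⟨(n + 1) / 2, (n + 1) / 2, by tauto, by omega, by omega⟩

/-- For `n ≥ 4` with `n ≡ 0` or `1 (mod 4)` and `ℓ ∈ [n]`, the number of `r`-fixed
`n`-queens configurations containing `U_ℓ` equals the number of those containing
`U_{n+1-ℓ}`. -/
theorem count_borderU_symm (n : ℕ) (hn : 4 ≤ n) (hmod : n % 4 = 0 ∨ n % 4 = 1)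
    (l : ℕ) (hl : l ∈ Finset.Icc 1 n) :
    ((board n).powerset.filter
        (fun Q => IsQueensConfig n Q ∧ rAct n Q = Q ∧ borderU n l ⊆ Q)).card =
      ((board n).powerset.filter
        (fun Q => IsQueensConfig n Q ∧ rAct n Q = Q ∧
          borderU n (n + 1 - l) ⊆ Q)).card := by
  rw [Finset.mem_Icc] at hl
  have key : ∀ m : ℕ, 1 ≤ m → m ≤ n → ∀ Q, Q ∈ (board n).powerset.filter
      (fun Q => IsQueensConfig n Q ∧ rAct n Q = Q ∧ borderU n m ⊆ Q) →
      sAct n Q ∈ (board n).powerset.filter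
      (fun Q => IsQueensConfig n Q ∧ rAct n Q = Q ∧ borderU n (n + 1 - m) ⊆ Q) := by
    intro m hm1 hm2 Q hQ
    rw [Finset.mem_filter, Finset.mem_powerset] at hQ ⊢
    obtain ⟨hsub, hcfg, hr, hU⟩ := hQ
    refine ⟨sAct_subset_board hsub, isQueensConfig_sAct hcfg, rAct_sAct hsub hr, ?_⟩
    rw [← sAct_borderU hmod hm1 hm2]
    exact Finset.image_subset_image hU
  have hl' : borderU n (n + 1 - (n + 1 - l)) = borderU n l := by
    congr 1
    omega
  refine Finset.card_nbij' (sAct n) (sAct n)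
    (key l hl.1 hl.2) (fun Q hQ => ?_) (fun Q hQ => ?_) (fun Q hQ => ?_)
  · have := key (n + 1 - l) (by omega) (by omega) Q hQ
    rwa [hl'] at this
  · rw [Finset.mem_coe, Finset.mem_filter, Finset.mem_powerset] at hQ
    exact sAct_sAct hQ.1
  · rw [Finset.mem_coe, Finset.mem_filter, Finset.mem_powerset] at hQ
    exact sAct_sAct hQ.1
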